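/- arXiv:1805.12464 — 3 statements merged into one kernel-verified Lean document; each statement's English description precedes it below -/
import Mathlib

section
/- The antipode of the Hopf algebra (k⟨A⟩, ∗_r, Δ) is S = Σ^{1−2r} ∘ T ∘ R, where T(w) = (−1)^{ℓ(w)}w and R reverses words. In particular for r = 1/2 the antipode is T∘R. -/
/-!
Quasi-shuffle algebras (Hoffman–Ihara).  We model the span `kA` of the alphabet
(with its commutative associative product `⋄`, written `*` in `L`) as a
non-unital commutative `k`-algebra `L`, and the word algebra `k⟨A⟩` as the
tensor algebra `TensorAlgebra k L`, in which a word `a₁⋯aₙ` is the product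
`ι a₁ * ⋯ * ι aₙ`.
-/

open TensorAlgebra

variable (k : Type*) [Field k]
variable {L : Type*} [NonUnitalCommRing L] [Module k L]
  [SMulCommClass k L L] [IsScalarTower k L L]

/-- The word `a₁⋯aₙ` as an element of the tensor algebra. -/
def word (l : List L) : TensorAlgebra k L := (l.map fun a => TensorAlgebra.ι k a).prod

/-- The `⋄`-product of the letters of a nonempty block (junk value `0` on `[]`). -/
def blockProd : List L → L
  | [] => 0
  | a :: t => t.foldl (· * ·) a

/-- The Hoffman–Ihara operator `Ψ_f` on words, for `f = c₁t + c₂t² + ⋯`: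
`Ψ_f(w) = Σ_{(i₁,…,i_m) composition of ℓ(w)} c_{i₁}⋯c_{i_m} I[w]`,
written via the recursion on the first block. -/
def psi (c : ℕ → k) : List L → TensorAlgebra k L
  | [] => 1
  | a :: w => ∑ j ∈ Finset.range (w.length + 1),
      c (j + 1) • (TensorAlgebra.ι k (blockProd (a :: w.take j)) * psi c (w.drop j))
  termination_by l => l.length
  decreasing_by simp [List.length_drop] <;> omega


set_option linter.unusedSectionVars false
set_option maxHeartbeats 1000000

lemma word_nil : word k ([] : List L) = 1 := rfl
lemma word_cons (a : L) (u : List L) : word k (a::u) = ι k a * word k u := by simp [word]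
lemma word_append (u v : List L) : word k (u++v) = word k u * word k v := by simp [word]
lemma word_singleton (a : L) : word k [a] = ι k a := by simp [word]

lemma span_words (x : TensorAlgebra k L) :
    x ∈ Submodule.span k (Set.range (word k (L := L))) := by
  have hmul : ∀ y z : TensorAlgebra k L,
      y ∈ Submodule.span k (Set.range (word k (L := L))) →
      z ∈ Submodule.span k (Set.range (word k (L := L))) →
      y * z ∈ Submodule.span k (Set.range (word k (L := L))) := by
    intro y z hy hz
    induction hy using Submodule.span_induction with
    | mem y hy =>
      obtain ⟨u, rfl⟩ := hy
      induction hz using Submodule.span_induction with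
      | mem z hz =>
        obtain ⟨v, rfl⟩ := hz
        exact Submodule.subset_span ⟨u ++ v, word_append k u v⟩
      | zero => simp
      | add z₁ z₂ _ _ h1 h2 => rw [mul_add]; exact add_mem h1 h2
      | smul a z _ h => rw [mul_smul_comm]; exact Submodule.smul_mem _ a h
    | zero => simp
    | add y₁ y₂ _ _ h1 h2 => rw [add_mul]; exact add_mem h1 h2
    | smul a y _ h => rw [smul_mul_assoc]; exact Submodule.smul_mem _ a h
  refine TensorAlgebra.induction ?_ ?_ ?_ ?_ x
  · intro r
    rw [Algebra.algebraMap_eq_smul_one]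
    exact Submodule.smul_mem _ r (Submodule.subset_span ⟨[], rfl⟩)
  · intro x; exact Submodule.subset_span ⟨[x], word_singleton k x⟩
  · exact hmul
  · intro a b ha hb; exact add_mem ha hb

lemma word_ind {P : TensorAlgebra k L → Prop}
    (hw : ∀ u : List L, P (word k u))
    (hadd : ∀ x y, P x → P y → P (x + y))
    (hsmul : ∀ (a : k) x, P x → P (a • x)) (x : TensorAlgebra k L) : P x := by
  have h0 : P 0 := by
    have := hsmul 0 (word k []) (hw [])
    rwa [zero_smul] at this
  induction span_words k x using Submodule.span_induction with
  | mem x hx => obtain ⟨u, rfl⟩ := hx; exact hw u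
  | zero => exact h0
  | add x y _ _ h1 h2 => exact hadd x y h1 h2
  | smul a x _ h => exact hsmul a x h

section AuxLemmas
variable {k}
variable (r : k)
variable (D : L → TensorAlgebra k L →ₗ[k] TensorAlgebra k L)
variable (hD1 : ∀ a : L, D a 1 = 0)
variable (hDw : ∀ (a c : L) (u : List L),
      D a (TensorAlgebra.ι k c * word k u) = TensorAlgebra.ι k (a * c) * word k u)
variable (R : TensorAlgebra k L →ₗ[k] TensorAlgebra k L)
variable (hR : ∀ w : List L, R (word k w) = word k w.reverse)
variable (mr : TensorAlgebra k L →ₗ[k] TensorAlgebra k L →ₗ[k] TensorAlgebra k L)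
variable (hmrl : ∀ x, mr 1 x = x) (hmrr : ∀ x, mr x 1 = x)
variable (hmrrec : ∀ (a b : L) (v w : List L),
      mr (word k (a :: v)) (word k (b :: w))
        = TensorAlgebra.ι k a * mr (word k v) (word k (b :: w))
          + TensorAlgebra.ι k b * mr (word k (a :: v)) (word k w)
          + (1 - 2 * r) • (TensorAlgebra.ι k (a * b) * mr (word k v) (word k w))
          + (r ^ 2 - r) • D (a * b) (mr (word k v) (word k w)))

section Dlem
include hDw

lemma Dword (a e : L) (t : List L) : D a (word k (e :: t)) = word k ((a*e) :: t) := by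
  rw [word_cons, hDw, word_cons]

include hD1

lemma Dmul (a e : L) (z : TensorAlgebra k L) : D a (ι k e * z) = ι k (a*e) * z := by
  induction z using word_ind with
  | hw u => exact hDw a e u
  | hadd x y hx hy => rw [mul_add, map_add, hx, hy, mul_add]
  | hsmul c x hx => rw [mul_smul_comm, map_smul, hx, mul_smul_comm]

lemma DD (a e : L) (z : TensorAlgebra k L) : D a (D e z) = D (a*e) z := by
  induction z using word_ind with
  | hw u =>
    cases u with
    | nil => rw [word_nil, hD1, hD1, map_zero]
    | cons f t =>
        rw [Dword D hDw, Dword D hDw, Dword D hDw, mul_assoc]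
  | hadd x y hx hy => rw [map_add, map_add, hx, hy, map_add]
  | hsmul c x hx => rw [map_smul, map_smul, hx, map_smul]

end Dlem

def W1 : Submodule k (TensorAlgebra k L) :=
  Submodule.span k (Set.range fun p : L × List L => word k (p.1 :: p.2))

lemma word_cons_mem_W1 (a : L) (u : List L) : word k (a :: u) ∈ (W1 : Submodule k (TensorAlgebra k L)) :=
  Submodule.subset_span ⟨(a, u), rfl⟩

lemma mul_ι_mem_W1 (a : L) (x : TensorAlgebra k L) : ι k a * x ∈ (W1 : Submodule k (TensorAlgebra k L)) := by
  induction x using word_ind with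
  | hw u => rw [← word_cons]; exact word_cons_mem_W1 a u
  | hadd x y hx hy => rw [mul_add]; exact add_mem hx hy
  | hsmul c x hx => rw [mul_smul_comm]; exact Submodule.smul_mem _ c hx

include hD1 hDw in
lemma D_mem_W1 (a : L) (z : TensorAlgebra k L) : D a z ∈ (W1 : Submodule k (TensorAlgebra k L)) := by
  induction z using word_ind with
  | hw u =>
    cases u with
    | nil => rw [word_nil, hD1]; exact zero_mem _
    | cons e t => rw [Dword D hDw]; exact word_cons_mem_W1 _ t
  | hadd x y hx hy => rw [map_add]; exact add_mem hx hy
  | hsmul c x hx => rw [map_smul]; exact Submodule.smul_mem _ c hx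

include hDw in
lemma DmulR (a b : L) (z : TensorAlgebra k L) (hz : z ∈ (W1 : Submodule k (TensorAlgebra k L))) :
    D a (z * ι k b) = (D a z) * ι k b := by
  induction hz using Submodule.span_induction with
  | mem x hx =>
    obtain ⟨⟨e, u⟩, rfl⟩ := hx
    have h1 : word k (e :: u) * ι k b = word k ((e :: u) ++ [b]) := by
      rw [word_append, word_singleton]
    rw [h1, List.cons_append, Dword D hDw, Dword D hDw, word_cons, word_cons,
      word_append, word_singleton, mul_assoc]
  | zero => simp
  | add x y _ _ hx hy => rw [add_mul, map_add, hx, hy, map_add, add_mul]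
  | smul c x _ hx => rw [smul_mul_assoc, map_smul, hx, map_smul, smul_mul_assoc]

include hDw in
lemma D_iota (a e : L) : D a (ι k e) = ι k (a * e) := by
  have := hDw a e []
  rwa [word_nil, mul_one, mul_one] at this

section Rlem
include hR

lemma RR (z : TensorAlgebra k L) : R (R z) = z := by
  induction z using word_ind with
  | hw u => rw [hR, hR, List.reverse_reverse]
  | hadd x y hx hy => rw [map_add, map_add, hx, hy]
  | hsmul c x hx => rw [map_smul, map_smul, hx]

lemma Rone : R (1 : TensorAlgebra k L) = 1 := by
  have := hR ([] : List L); rwa [word_nil, List.reverse_nil, word_nil] at this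

lemma RmulR (b : L) (z : TensorAlgebra k L) : R (z * ι k b) = ι k b * R z := by
  induction z using word_ind with
  | hw u =>
    have h1 : word k u * ι k b = word k (u ++ [b]) := by rw [word_append, word_singleton]
    rw [h1, hR, List.reverse_append, List.reverse_singleton, List.singleton_append,
      word_cons, hR]
  | hadd x y hx hy => rw [add_mul, map_add, hx, hy, map_add, mul_add]
  | hsmul c x hx => rw [smul_mul_assoc, map_smul, hx, map_smul, mul_smul_comm]

lemma RmulL (a : L) (z : TensorAlgebra k L) : R (ι k a * z) = R z * ι k a := by
  induction z using word_ind with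
  | hw u =>
    rw [← word_cons, hR, hR, List.reverse_cons, word_append, word_singleton]
  | hadd x y hx hy => rw [mul_add, map_add, hx, hy, map_add, add_mul]
  | hsmul c x hx => rw [mul_smul_comm, map_smul, hx, map_smul, smul_mul_assoc]

lemma R_mem_W1 (z : TensorAlgebra k L) (hz : z ∈ (W1 : Submodule k (TensorAlgebra k L))) :
    R z ∈ (W1 : Submodule k (TensorAlgebra k L)) := by
  induction hz using Submodule.span_induction with
  | mem x hx =>
    obtain ⟨⟨e, u⟩, rfl⟩ := hx
    rw [hR]
    rcases List.exists_cons_of_ne_nil (by simp : (e :: u).reverse ≠ []) with ⟨f, t, ht⟩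
    rw [ht]; exact word_cons_mem_W1 f t
  | zero => rw [map_zero]; exact zero_mem _
  | add x y _ _ hx hy => rw [map_add]; exact add_mem hx hy
  | smul c x _ hx => rw [map_smul]; exact Submodule.smul_mem _ c hx

end Rlem

/-- `DR a z = R (D a (R z))` : merge `a` into the last letter. -/
noncomputable def DR : L → TensorAlgebra k L →ₗ[k] TensorAlgebra k L :=
  fun a => R ∘ₗ (D a) ∘ₗ R

lemma DR_apply (a : L) (z : TensorAlgebra k L) : DR D R a z = R (D a (R z)) := rfl

section DRlem
include hR

lemma RD (a : L) (z : TensorAlgebra k L) : R (D a z) = DR D R a (R z) := by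
  rw [DR_apply, RR R hR]

include hD1
lemma DR1 (a : L) : DR D R a (1 : TensorAlgebra k L) = 0 := by
  rw [DR_apply, Rone R hR, hD1, map_zero]

include hDw
lemma DRmul (a b : L) (z : TensorAlgebra k L) :
    DR D R a (z * ι k b) = z * ι k (a * b) := by
  rw [DR_apply, RmulR R hR, Dmul D hD1 hDw, ← RmulR R hR, RR R hR]

lemma DR_iota (a e : L) : DR D R a (ι k e) = ι k (a * e) := by
  have := DRmul D hD1 hDw R hR a e 1
  rwa [one_mul, one_mul] at this

lemma DR_leftmul (s a : L) (z : TensorAlgebra k L) (hz : z ∈ (W1 : Submodule k (TensorAlgebra k L))) :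
    DR D R a (ι k s * z) = ι k s * DR D R a z := by
  rw [DR_apply, RmulL R hR, DmulR D hDw _ _ _ (R_mem_W1 R hR z hz), RmulR R hR, DR_apply]

lemma D_DR_comm (x y : L) (z : TensorAlgebra k L) :
    D x (DR D R y z) = DR D R y (D x z) := by
  induction z using word_ind with
  | hw u =>
    cases u with
    | nil => rw [word_nil, DR1 D hD1 R hR, hD1, map_zero, map_zero]
    | cons e t =>
      cases t with
      | nil =>
        rw [word_singleton, DR_iota D hD1 hDw R hR, D_iota D hDw, D_iota D hDw,
          DR_iota D hD1 hDw R hR, mul_left_comm]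
      | cons f t' =>
        have hz : word k (f :: t') ∈ (W1 : Submodule k (TensorAlgebra k L)) :=
          word_cons_mem_W1 f t'
        rw [word_cons, DR_leftmul D hD1 hDw R hR _ _ _ hz, Dmul D hD1 hDw,
          Dmul D hD1 hDw, DR_leftmul D hD1 hDw R hR _ _ _ hz]
  | hadd u v hu hv => rw [map_add, map_add, hu, hv, map_add, map_add]
  | hsmul c u hu => rw [map_smul, map_smul, hu, map_smul, map_smul]

/-- The key pairing lemma. -/
lemma KEYU (s t u v : L) (h : u * v = t * s) (z : TensorAlgebra k L) :
    ι k s * DR D R t z + D u (z * ι k v) = (D u z) * ι k v + DR D R t (ι k s * z) := by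
  induction z using word_ind with
  | hw l =>
    cases l with
    | nil =>
      rw [word_nil, DR1 D hD1 R hR, mul_zero, one_mul, mul_one, hD1, zero_mul,
        D_iota D hDw, DR_iota D hD1 hDw R hR, zero_add, zero_add, h]
    | cons e l' =>
      have hz : word k (e :: l') ∈ (W1 : Submodule k (TensorAlgebra k L)) :=
        word_cons_mem_W1 e l'
      rw [DmulR D hDw _ _ _ hz, DR_leftmul D hD1 hDw R hR _ _ _ hz]
      abel
  | hadd x y hx hy =>
    have h2 := congrArg₂ (· + ·) hx hy
    simp only [mul_add, add_mul, map_add] at h2 ⊢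
    abel_nf at h2 ⊢
    exact h2
  | hsmul c x hx =>
    rw [map_smul, mul_smul_comm, smul_mul_assoc, map_smul, map_smul, smul_mul_assoc,
      mul_smul_comm, map_smul, ← smul_add, ← smul_add, hx]

end DRlem

lemma mr_add1 (x y z : TensorAlgebra k L) : mr (x + y) z = mr x z + mr y z := by
  rw [map_add, LinearMap.add_apply]
lemma mr_smul1 (c : k) (x z : TensorAlgebra k L) : mr (c • x) z = c • mr x z := by
  rw [map_smul, LinearMap.smul_apply]

section mrlem
include hmrl hmrr hmrrec

lemma mr_comm : ∀ (u v : List L), mr (word k u) (word k v) = mr (word k v) (word k u) := by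
  suffices H : ∀ (N : ℕ) (u v : List L), u.length + v.length ≤ N →
      mr (word k u) (word k v) = mr (word k v) (word k u) by
    exact fun u v => H (u.length + v.length) u v le_rfl
  intro N
  induction N with
  | zero =>
    intro u v h
    have hu : u = [] := by cases u <;> simp_all
    have hv : v = [] := by cases v <;> simp_all
    rw [hu, hv]
  | succ N ih =>
    intro u v h
    match u, v with
    | [], v => rw [word_nil, hmrl, hmrr]
    | u, [] => rw [word_nil, hmrl, hmrr]
    | a :: u', b :: v' =>
      rw [hmrrec, hmrrec,
        ih u' (b :: v') (by simp at h ⊢; omega),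
        ih (a :: u') v' (by simp at h ⊢; omega),
        ih u' v' (by simp at h ⊢; omega),
        mul_comm b a]
      abel

lemma mr_comm' (v : List L) (x : TensorAlgebra k L) :
    mr x (word k v) = mr (word k v) x := by
  induction x using word_ind with
  | hw u => exact mr_comm r D mr hmrl hmrr hmrrec u v
  | hadd x y hx hy =>
    simp only [map_add, LinearMap.add_apply, hx, hy]
  | hsmul c x hx =>
    simp only [map_smul, LinearMap.smul_apply, hx]

end mrlem

include hmrrec in
lemma R1 (a b : L) (y : List L) (z : TensorAlgebra k L) :
    mr (ι k a * z) (word k (b :: y))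
      = ι k a * mr z (word k (b :: y))
        + ι k b * mr (ι k a * z) (word k y)
        + (1 - 2 * r) • (ι k (a * b) * mr z (word k y))
        + (r ^ 2 - r) • D (a * b) (mr z (word k y)) := by
  induction z using word_ind with
  | hw u => rw [← word_cons]; exact hmrrec a b u y
  | hadd x y' hx hy =>
    simp only [mul_add, map_add, LinearMap.add_apply, mr_add1, smul_add] at hx hy ⊢
    rw [hx, hy]; abel
  | hsmul e x hx =>
    simp only [mul_smul_comm, map_smul, LinearMap.smul_apply, mr_smul1] at hx ⊢
    rw [hx]
    simp only [smul_add, mul_smul_comm, smul_comm e]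

include hD1 hDw hmrl hmrrec in
lemma R2 (a b : L) (y : List L) (z : TensorAlgebra k L) :
    mr (D a z) (word k (b :: y))
      = D a (mr z (word k (b :: y)))
        - ι k (a * b) * mr z (word k y)
        + ι k b * mr (D a z) (word k y) := by
  induction z using word_ind with
  | hw u =>
    cases u with
    | nil =>
      rw [word_nil, hD1, map_zero, LinearMap.zero_apply, hmrl, hmrl,
        Dword D hDw, word_cons]
      simp only [LinearMap.zero_apply, mul_zero, add_zero]
      abel
    | cons e t =>
      rw [Dword D hDw, hmrrec, hmrrec, map_add, map_add, map_add, map_smul, map_smul,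
        Dmul D hD1 hDw, Dmul D hD1 hDw, Dmul D hD1 hDw, DD D hD1 hDw,
        ← mul_assoc a e b]
      abel
  | hadd x y' hx hy =>
    simp only [map_add, LinearMap.add_apply, mr_add1, mul_add] at hx hy ⊢
    rw [hx, hy]; abel
  | hsmul e x hx =>
    simp only [map_smul, LinearMap.smul_apply, mr_smul1, mul_smul_comm, smul_sub,
      smul_add] at hx ⊢
    rw [hx]
    simp only [smul_sub, smul_add, mul_smul_comm, smul_comm e]

include hD1 hDw hmrl hmrrec in
lemma MR (a b : L) (y : List L) (z : TensorAlgebra k L) :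
    mr (ι k a * z + (1 - 2 * r) • D a z) (word k (b :: y))
      = (ι k a * mr z (word k (b :: y)) + (1 - 2 * r) • D a (mr z (word k (b :: y))))
        + ι k b * mr (ι k a * z + (1 - 2 * r) • D a z) (word k y)
        + (r ^ 2 - r) • D (a * b) (mr z (word k y)) := by
  rw [mr_add1, mr_smul1, R1 r D mr hmrrec, R2 r D hD1 hDw mr hmrl hmrrec,
    mr_add1, mr_smul1]
  simp only [smul_sub, smul_add, mul_add, mul_smul_comm]
  abel

include hD1 hDw hmrl hmrr hmrrec in
lemma mr_W1 (u v : List L) (h : u ≠ [] ∨ v ≠ []) :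
    mr (word k u) (word k v) ∈ (W1 : Submodule k (TensorAlgebra k L)) := by
  match u, v with
  | [], [] => simp at h
  | [], b :: v' => rw [word_nil, hmrl]; exact word_cons_mem_W1 b v'
  | a :: u', [] => rw [word_nil, hmrr]; exact word_cons_mem_W1 a u'
  | a :: u', b :: v' =>
    rw [hmrrec]
    exact add_mem (add_mem (add_mem (mul_ι_mem_W1 _ _) (mul_ι_mem_W1 _ _))
      (Submodule.smul_mem _ _ (mul_ι_mem_W1 _ _)))
      (Submodule.smul_mem _ _ (D_mem_W1 D hD1 hDw _ _))

include hD1 hDw hR hmrl hmrr hmrrec in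
lemma backrec : ∀ (v w : List L) (a b : L),
    mr (word k (v ++ [a])) (word k (w ++ [b]))
      = mr (word k (v ++ [a])) (word k w) * ι k b
        + mr (word k v) (word k (w ++ [b])) * ι k a
        + (1 - 2 * r) • (mr (word k v) (word k w) * ι k (a * b))
        + (r ^ 2 - r) • DR D R (a * b) (mr (word k v) (word k w)) := by
  suffices H : ∀ (N : ℕ) (v w : List L), v.length + w.length ≤ N → ∀ (a b : L),
      mr (word k (v ++ [a])) (word k (w ++ [b]))
      = mr (word k (v ++ [a])) (word k w) * ι k b
        + mr (word k v) (word k (w ++ [b])) * ι k a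
        + (1 - 2 * r) • (mr (word k v) (word k w) * ι k (a * b))
        + (r ^ 2 - r) • DR D R (a * b) (mr (word k v) (word k w)) by
    exact fun v w a b => H (v.length + w.length) v w le_rfl a b
  intro N
  induction N with
  | zero =>
    intro v w h a b
    have hv : v = [] := by cases v <;> simp_all
    have hw : w = [] := by cases w <;> simp_all
    subst hv; subst hw
    simp only [List.nil_append, word_nil, hmrl, hmrr]
    rw [hmrrec a b [] []]
    simp only [word_nil, word_singleton, hmrl, hmrr, hD1, DR1 D hD1 R hR, one_mul,
      mul_one, smul_zero, add_zero]
  | succ N ih =>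
    intro v w h a b
    match v, w with
    | [], [] =>
      simp only [List.nil_append, word_nil, hmrl, hmrr]
      rw [hmrrec a b [] []]
      simp only [word_nil, word_singleton, hmrl, hmrr, hD1, DR1 D hD1 R hR, one_mul,
        mul_one, smul_zero, add_zero]
    | [], s :: w' =>
      have e3 := ih [] w' (by simp at h ⊢; omega) a b
      simp only [List.nil_append, word_nil, hmrl] at e3
      simp only [List.cons_append, List.nil_append, word_nil, hmrl]
      rw [hmrrec a s [] (w' ++ [b]), hmrrec a s [] w']
      simp only [word_nil, hmrl]
      rw [e3]
      simp only [word_cons, word_append, word_singleton, word_nil, mul_one, one_mul,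
        mul_add, add_mul, smul_add, mul_smul_comm, smul_mul_assoc, mul_assoc]
      linear_combination (norm := module) (r^2 - r) •
        (KEYU D hD1 hDw R hR s (a*b) (a*s) b (by rw [mul_right_comm]) (word k w'))
    | p :: v', [] =>
      have e3 := ih v' [] (by simp at h ⊢; omega) a b
      simp only [List.nil_append, word_nil, hmrl, hmrr] at e3
      simp only [List.cons_append, List.nil_append, word_nil, hmrr]
      rw [hmrrec p b (v' ++ [a]) [], hmrrec p b v' []]
      simp only [word_nil, hmrr]
      rw [e3]
      simp only [word_cons, word_append, word_singleton, word_nil, mul_one, one_mul,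
        mul_add, add_mul, smul_add, mul_smul_comm, smul_mul_assoc, mul_assoc]
      linear_combination (norm := module) (r^2 - r) •
        (KEYU D hD1 hDw R hR p (a*b) (p*b) a
          (by rw [mul_comm p b, mul_right_comm b p a, mul_comm b a]) (word k v'))
    | p :: v', s :: w' =>
      have e1 := ih v' (s :: w') (by simp at h ⊢; omega) a b
      have e2 := ih (p :: v') w' (by simp at h ⊢; omega) a b
      have e3 := ih v' w' (by simp at h ⊢; omega) a b
      simp only [List.cons_append, List.nil_append] at e1 e2 ⊢
      have m1 : mr (word k v') (word k (s :: w')) ∈ (W1 : Submodule k (TensorAlgebra k L)) :=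
        mr_W1 r D hD1 hDw mr hmrl hmrr hmrrec v' (s :: w') (Or.inr (by simp))
      have m2 : mr (word k (p :: v')) (word k w') ∈ (W1 : Submodule k (TensorAlgebra k L)) :=
        mr_W1 r D hD1 hDw mr hmrl hmrr hmrrec (p :: v') w' (Or.inl (by simp))
      have m3 : mr (word k (v' ++ [a])) (word k w') ∈ (W1 : Submodule k (TensorAlgebra k L)) :=
        mr_W1 r D hD1 hDw mr hmrl hmrr hmrrec (v' ++ [a]) w' (Or.inl (by simp))
      have m4 : mr (word k v') (word k (w' ++ [b])) ∈ (W1 : Submodule k (TensorAlgebra k L)) :=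
        mr_W1 r D hD1 hDw mr hmrl hmrr hmrrec v' (w' ++ [b]) (Or.inr (by simp))
      rw [hmrrec p s (v' ++ [a]) (w' ++ [b]), hmrrec p s (v' ++ [a]) w',
        hmrrec p s v' (w' ++ [b]), hmrrec p s v' w', e1, e2, e3]
      simp only [map_add, map_smul]
      rw [DmulR D hDw (p*s) b _ m3, DmulR D hDw (p*s) a _ m4,
        DR_leftmul D hD1 hDw R hR p (a*b) _ m1, DR_leftmul D hD1 hDw R hR s (a*b) _ m2,
        D_DR_comm D hD1 hDw R hR (p*s) (a*b)]
      simp only [mul_add, add_mul, smul_add, mul_smul_comm, smul_mul_assoc, mul_assoc]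
      linear_combination (norm := module) ((r^2 - r) * (1 - 2*r)) •
        (KEYU D hD1 hDw R hR (p*s) (a*b) (p*s) (a*b) (mul_comm _ _) (mr (word k v') (word k w')))

include hD1 hDw hR hmrl hmrr hmrrec in
lemma Req : ∀ (u v : List L),
    R (mr (word k u) (word k v)) = mr (word k u.reverse) (word k v.reverse) := by
  suffices H : ∀ (N : ℕ) (u v : List L), u.length + v.length ≤ N →
      R (mr (word k u) (word k v)) = mr (word k u.reverse) (word k v.reverse) by
    exact fun u v => H (u.length + v.length) u v le_rfl
  intro N
  induction N with
  | zero =>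
    intro u v h
    have hu : u = [] := by cases u <;> simp_all
    have hv : v = [] := by cases v <;> simp_all
    subst hu; subst hv
    simp only [List.reverse_nil, word_nil, hmrl, Rone R hR]
  | succ N ih =>
    intro u v h
    match u, v with
    | [], v => simp only [List.reverse_nil, word_nil, hmrl, hR]
    | u, [] => simp only [List.reverse_nil, word_nil, hmrr, hR]
    | a :: u', b :: v' =>
      have e1 := ih u' (b :: v') (by simp at h ⊢; omega)
      have e2 := ih (a :: u') v' (by simp at h ⊢; omega)
      have e3 := ih u' v' (by simp at h ⊢; omega)
      simp only [List.reverse_cons] at e1 e2 ⊢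
      rw [hmrrec, map_add, map_add, map_add, map_smul, map_smul,
        RmulL R hR, RmulL R hR, RmulL R hR, RD D R hR, e1, e2, e3,
        backrec r D hD1 hDw R hR mr hmrl hmrr hmrrec]
      abel

include hD1 hDw hR hmrl hmrr hmrrec in
lemma Req' (v : List L) (x : TensorAlgebra k L) :
    R (mr x (word k v)) = mr (R x) (word k v.reverse) := by
  induction x using word_ind with
  | hw u => rw [Req r D hD1 hDw R hR mr hmrl hmrr hmrrec, hR]
  | hadd x y hx hy => simp only [map_add, mr_add1, LinearMap.add_apply, hx, hy]
  | hsmul c x hx => simp only [map_smul, mr_smul1, LinearMap.smul_apply, hx]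

lemma foldl_mul (t : List L) : ∀ x h : L, x * t.foldl (· * ·) h = t.foldl (· * ·) (x * h) := by
  induction t with
  | nil => intro x h; rfl
  | cons y t ih => intro x h; simp only [List.foldl_cons]; rw [ih, mul_assoc]

lemma blockProd_cons (a : L) (u : List L) (h : u ≠ []) :
    blockProd (a :: u) = a * blockProd u := by
  match u with
  | b :: t => simp only [blockProd, List.foldl_cons]; rw [foldl_mul]

lemma blockProd_singleton (a : L) : blockProd [a] = a := rfl

lemma blockProd_append (u : List L) (hu : u ≠ []) (y : L) :
    blockProd (u ++ [y]) = blockProd u * y := by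
  match u with
  | a :: t => simp only [blockProd, List.cons_append, List.foldl_append, List.foldl_cons,
      List.foldl_nil]

lemma psi_nil (c : ℕ → k) : psi k c ([] : List L) = 1 := by rw [psi]

include hD1 hDw in
lemma psi_cons (a : L) (u : List L) :
    psi k (fun n => (1 - 2*r)^(n-1)) (a :: u)
      = ι k a * psi k (fun n => (1 - 2*r)^(n-1)) u
        + (1 - 2*r) • D a (psi k (fun n => (1 - 2*r)^(n-1)) u) := by
  match u with
  | [] =>
    rw [psi_nil, hD1, smul_zero, add_zero, mul_one, psi]
    simp [blockProd_singleton, psi_nil]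
  | b :: t =>
    rw [psi, Finset.sum_range_succ']
    have h0 : ((fun n => (1 - 2*r)^(n-1)) (0 + 1) : k) •
        (ι k (blockProd (a :: (b :: t).take 0)) * psi k (fun n => (1 - 2*r)^(n-1)) ((b :: t).drop 0))
        = ι k a * psi k (fun n => (1 - 2*r)^(n-1)) (b :: t) := by
      simp [blockProd_singleton]
    rw [h0, add_comm]
    congr 1
    rw [psi, map_sum, Finset.smul_sum]
    simp only [List.length_cons]
    refine Finset.sum_congr rfl fun j hj => ?_
    simp only [List.take_succ_cons, List.drop_succ_cons, map_smul,
      Dmul D hD1 hDw, Nat.add_sub_cancel]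
    rw [← blockProd_cons a (b :: t.take j) (by simp), smul_smul, pow_succ']

include hD1 hDw in
lemma psi_mem_W1 (a : L) (u : List L) :
    psi k (fun n => (1 - 2*r)^(n-1)) (a :: u) ∈ (W1 : Submodule k (TensorAlgebra k L)) := by
  rw [psi]
  exact Submodule.sum_mem _ fun j hj => Submodule.smul_mem _ _ (mul_ι_mem_W1 _ _)

include hD1 hDw in
lemma psi_single (a : L) : psi k (fun n => (1 - 2*r)^(n-1)) [a] = ι k a := by
  rw [psi_cons r D hD1 hDw, psi_nil, hD1, smul_zero, add_zero, mul_one]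

include hD1 hDw hR in
lemma psi_append (a : L) (x : List L) :
    psi k (fun n => (1 - 2*r)^(n-1)) (x ++ [a])
      = psi k (fun n => (1 - 2*r)^(n-1)) x * ι k a
        + (1 - 2*r) • DR D R a (psi k (fun n => (1 - 2*r)^(n-1)) x) := by
  induction x with
  | nil =>
    rw [List.nil_append, psi_nil, one_mul, DR1 D hD1 R hR, smul_zero, add_zero,
      psi_cons r D hD1 hDw, psi_nil, hD1, smul_zero, add_zero, mul_one]
  | cons e x' ih =>
    rw [List.cons_append, psi_cons r D hD1 hDw, psi_cons r D hD1 hDw, ih]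
    match x' with
    | [] =>
      simp only [psi_nil, DR1 D hD1 R hR, hD1, smul_zero, add_zero, mul_one, one_mul,
        D_iota D hDw, DR_iota D hD1 hDw R hR, mul_comm e a]
    | f :: t =>
      have hw1 : psi k (fun n => (1 - 2*r)^(n-1)) (f :: t) ∈ (W1 : Submodule k (TensorAlgebra k L)) :=
        psi_mem_W1 r D hD1 hDw f t
      rw [mul_add, map_add, map_add, map_smul, map_smul, mul_smul_comm,
        DmulR D hDw _ _ _ hw1, DR_leftmul D hD1 hDw R hR _ _ _ hw1,
        D_DR_comm D hD1 hDw R hR, add_mul, smul_mul_assoc, mul_assoc]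
      simp only [smul_add, smul_smul]
      abel

include hD1 hDw hR in
lemma psi_rev (u : List L) :
    R (psi k (fun n => (1 - 2*r)^(n-1)) u) = psi k (fun n => (1 - 2*r)^(n-1)) u.reverse := by
  induction u with
  | nil => rw [psi_nil, Rone R hR, List.reverse_nil, psi_nil]
  | cons a u' ih =>
    rw [psi_cons r D hD1 hDw, map_add, map_smul, RmulL R hR, RD D R hR, ih,
      List.reverse_cons, psi_append r D hD1 hDw R hR]

/-- `F i j = Ψ(reverse of i-prefix) ∗ (suffix after j)`. -/
noncomputable def auxF (w : List L) (i j : ℕ) : TensorAlgebra k L :=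
  mr (psi k (fun n => (1 - 2*r)^(n-1)) ((w.take i).reverse)) (word k (w.drop j))

/-- product of the letters `w[i], …, w[i+l-1]`. -/
def auxSeg (w : List L) (i l : ℕ) : L := blockProd ((w.drop i).take l)

noncomputable def auxK (w : List L) (l i : ℕ) : TensorAlgebra k L :=
  if l = 0 then auxF r mr w i i else D (auxSeg w i l) (auxF r mr w i (i + l))

noncomputable def auxP (w : List L) (l i : ℕ) : TensorAlgebra k L :=
  ι k (auxSeg w i l) * auxF r mr w i (i + l)
    + (1 - 2*r) • D (auxSeg w i l) (auxF r mr w i (i + l))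

noncomputable def auxQ (w : List L) (l i : ℕ) : TensorAlgebra k L :=
  ι k (auxSeg w i l) * auxF r mr w i (i + l)

noncomputable def auxA (w : List L) (l : ℕ) : TensorAlgebra k L :=
  ∑ i ∈ Finset.range (w.length - l + 1), ((-1 : k)^i) • auxK r D mr w l i

lemma take_rev_succ (w : List L) (i : ℕ) (hi : i < w.length) :
    (w.take (i+1)).reverse = w[i] :: (w.take i).reverse := by
  rw [List.take_succ, List.getElem?_eq_getElem hi]
  simp

include hmrr in
lemma auxF_top (w : List L) (i j : ℕ) (hj : w.length ≤ j) :
    auxF r mr w i j = psi k (fun n => (1 - 2*r)^(n-1)) ((w.take i).reverse) := by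
  rw [auxF, List.drop_eq_nil_of_le hj, word_nil, hmrr]

include hmrl in
lemma auxF_zero (w : List L) (j : ℕ) :
    auxF r mr w 0 j = word k (w.drop j) := by
  rw [auxF, List.take_zero, List.reverse_nil, psi_nil, hmrl]

include hD1 hDw hmrl hmrr hmrrec in
lemma auxF_step (w : List L) (i j : ℕ) (hi : i < w.length) (hj : j < w.length) :
    auxF r mr w (i+1) j
      = (ι k (w[i]) * auxF r mr w i j + (1 - 2*r) • D (w[i]) (auxF r mr w i j))
        + ι k (w[j]) * auxF r mr w (i+1) (j+1)
        + (r^2 - r) • D (w[i] * w[j]) (auxF r mr w i (j+1)) := by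
  have hdrop : w.drop j = w[j] :: w.drop (j+1) := List.drop_eq_getElem_cons hj
  rw [auxF, auxF, auxF, auxF, hdrop, take_rev_succ w i hi, psi_cons r D hD1 hDw,
    MR r D hD1 hDw mr hmrl hmrrec]

lemma auxSeg_one (w : List L) (i : ℕ) (hi : i < w.length) :
    auxSeg w i 1 = w[i] := by
  rw [auxSeg, List.drop_eq_getElem_cons hi, show (1:ℕ) = 0+1 from rfl,
    List.take_succ_cons, List.take_zero, blockProd_singleton]

lemma auxSeg_succ (w : List L) (i l : ℕ) (hl : 1 ≤ l) (hil : i + l < w.length) :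
    auxSeg w i (l+1) = auxSeg w i l * w[i+l] := by
  have h1 : l < (w.drop i).length := by simp; omega
  rw [auxSeg, auxSeg, List.take_succ, List.getElem?_eq_getElem h1,
    List.getElem_drop]
  rw [Option.toList_some, blockProd_append]
  have : (List.take l (List.drop i w)).length = l := by simp; omega
  intro hcon; rw [hcon] at this; simp at this; omega

lemma auxSeg_cons (w : List L) (i l : ℕ) (hl : 1 ≤ l) (hil : i + l < w.length) :
    w[i]'(by omega) * auxSeg w (i+1) l = auxSeg w i (l+1) := by
  have h1 : i < w.length := by omega
  rw [auxSeg, auxSeg, List.drop_eq_getElem_cons h1, List.take_succ_cons, ← List.drop_drop]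
  rw [blockProd_cons]
  have : (List.take l (List.drop 1 (List.drop i w))).length = l := by
    simp [List.drop_drop]; omega
  intro hcon; rw [hcon] at this; simp at this; omega

lemma auxSeg_succ' (w : List L) (i l j l2 : ℕ) (hl : 1 ≤ l) (hj : j < w.length)
    (hij : i + l = j) (hl2 : l2 = l + 1) :
    auxSeg w i l2 = auxSeg w i l * w[j] := by
  subst hij; subst hl2; exact auxSeg_succ w i l hl hj

lemma auxSeg_cons' (w : List L) (i l l2 : ℕ) (hl : 1 ≤ l) (hil : i + l < w.length)
    (hl2 : l2 = l + 1) (hi : i < w.length) :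
    w[i]'hi * auxSeg w (i+1) l = auxSeg w i l2 := by
  subst hl2; exact auxSeg_cons w i l hl hil

include hD1 hDw hmrl hmrr hmrrec in
lemma auxK_step (w : List L) (l i : ℕ) (h : i + l + 2 ≤ w.length) :
    auxK r D mr w l (i+1)
      = auxP r D mr w (l+1) i + auxQ r mr w (l+1) (i+1)
        + (r^2 - r) • auxK r D mr w (l+2) i := by
  match l with
  | 0 =>
    have hi : i < w.length := by omega
    have hj : i + 1 < w.length := by omega
    rw [auxK, if_pos rfl, auxF_step r D hD1 hDw mr hmrl hmrr hmrrec w i (i+1) hi hj,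
      auxP, auxQ, auxK, if_neg (by omega), auxSeg_one w i hi, auxSeg_one w (i+1) hj,
      auxSeg_succ w i 1 le_rfl (by omega), auxSeg_one w i hi]
  | l' + 1 =>
    have hi : i < w.length := by omega
    have hj : i + l' + 2 < w.length := by omega
    have hij : (i+1) + (l'+1) = i + l' + 2 := by omega
    rw [auxK, if_neg (by omega), hij,
      auxF_step r D hD1 hDw mr hmrl hmrr hmrrec w i (i + l' + 2) hi hj]
    simp only [map_add, map_smul]
    rw [Dmul D hD1 hDw, Dmul D hD1 hDw, DD D hD1 hDw, DD D hD1 hDw]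
    rw [auxP, auxQ, auxK, if_neg (by omega)]
    have hs1 : auxSeg w (i+1) (l'+1) * w[i]'hi = auxSeg w i (l'+1+1) := by
      rw [mul_comm, auxSeg_cons' w i (l'+1) (l'+1+1) (by omega) (by omega) rfl hi]
    have hs2 : auxSeg w (i+1) (l'+1) * w[i + l' + 2]'hj = auxSeg w (i+1) (l'+1+1) := by
      rw [← auxSeg_succ' w (i+1) (l'+1) (i+l'+2) (l'+1+1) (by omega) hj (by omega) rfl]
    have hs3 : auxSeg w (i+1) (l'+1) * (w[i]'hi * w[i + l' + 2]'hj)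
        = auxSeg w i (l'+1+2) := by
      rw [← mul_assoc, hs1,
        auxSeg_succ' w i (l'+1+1) (i+l'+2) (l'+1+2) (by omega) hj (by omega) rfl]
    rw [hs1, hs2, hs3]
    have e1 : i + (l'+1+1) = i + l' + 2 := by omega
    have e2 : (i+1) + (l'+1+1) = i + l' + 2 + 1 := by omega
    have e3 : i + (l'+1+2) = i + l' + 2 + 1 := by omega
    rw [e1, e2, e3]

include hD1 hDw hmrl in
lemma auxK_zero (w : List L) (l : ℕ) (hl : l < w.length) :
    auxK r D mr w l 0 = auxQ r mr w (l+1) 0 := by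
  match l with
  | 0 =>
    rw [auxK, if_pos rfl, auxF_zero r mr hmrl, List.drop_zero, auxQ,
      auxSeg_one w 0 hl, auxF_zero r mr hmrl, show (0+1 : ℕ) = 1 from rfl]
    conv_lhs => rw [← List.drop_zero (l := w), List.drop_eq_getElem_cons hl]
    rw [word_cons]
  | l'' + 1 =>
    rw [auxK, if_neg (by omega), auxF_zero r mr hmrl, show 0 + (l''+1) = l''+1 from by omega,
      List.drop_eq_getElem_cons hl, word_cons, Dmul D hD1 hDw, auxQ,
      auxF_zero r mr hmrl, show 0 + (l''+1+1) = l''+1+1 from by omega,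
      auxSeg_succ' w 0 (l''+1) (l''+1) (l''+1+1) (by omega) hl (by omega) rfl]

include hD1 hDw hmrr in
lemma auxK_top (w : List L) (l m : ℕ) (hlen : w.length = l + m + 1) :
    auxK r D mr w l (m+1) = auxP r D mr w (l+1) m := by
  have hm : m < w.length := by omega
  match l with
  | 0 =>
    rw [auxK, if_pos rfl, auxF_top r mr hmrr w (m+1) (m+1) (by omega),
      take_rev_succ w m hm, psi_cons r D hD1 hDw, auxP, auxSeg_one w m hm,
      auxF_top r mr hmrr w m (m+1) (by omega)]
  | l'' + 1 =>
    rw [auxK, if_neg (by omega),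
      auxF_top r mr hmrr w (m+1) (m+1+(l''+1)) (by omega),
      take_rev_succ w m hm, psi_cons r D hD1 hDw, map_add, map_smul,
      Dmul D hD1 hDw, DD D hD1 hDw, auxP,
      auxF_top r mr hmrr w m (m+(l''+1+1)) (by omega),
      mul_comm (auxSeg w (m+1) (l''+1)) (w[m]'hm),
      auxSeg_cons' w m (l''+1) (l''+1+1) (by omega) (by omega) rfl hm]

lemma auxPQ (w : List L) (l i : ℕ) :
    auxP r D mr w (l+1) i = auxQ r mr w (l+1) i + (1 - 2*r) • auxK r D mr w (l+1) i := by
  rw [auxP, auxQ, auxK, if_neg (by omega)]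

include hD1 hmrl in
lemma auxK_nil (w : List L) (l : ℕ) (hl : w.length ≤ l) (h1 : 1 ≤ l) :
    auxK r D mr w l 0 = 0 := by
  rw [auxK, if_neg (by omega), auxF_zero r mr hmrl, show (0 + l) = l from by omega,
    List.drop_eq_nil_of_le hl, word_nil, hD1]

include hD1 hDw hmrl hmrr hmrrec in
lemma Amaster : ∀ (m l : ℕ) (w : List L), w.length = l + m → 1 ≤ w.length →
    auxA r D mr w l = 0 := by
  intro m
  induction m using Nat.strong_induction_on with
  | _ m ih =>
    intro l w hlen hw
    match m with
    | 0 =>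
      have h0 : w.length - l = 0 := by omega
      rw [auxA, h0]
      rw [Finset.sum_range_one, pow_zero, one_smul,
        auxK_nil r D hD1 mr hmrl w l (by omega) (by omega)]
    | 1 =>
      have h0 : w.length - l = 1 := by omega
      rw [auxA, h0, Finset.sum_range_succ, Finset.sum_range_one, pow_zero, one_smul,
        auxK_zero r D hD1 hDw mr hmrl w l (by omega)]
      have htop := auxK_top r D hD1 hDw mr hmrr w l 0 (by omega)
      rw [show (0+1 : ℕ) = 1 from rfl] at htop
      rw [htop, auxPQ, auxK_nil r D hD1 mr hmrl w (l+1) (by omega) (by omega), smul_zero,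
        add_zero, pow_one, neg_one_smul]
      abel
    | m' + 2 =>
      have hA1 := ih (m'+1) (by omega) (l+1) w (by omega) hw
      have hA2 := ih m' (by omega) (l+2) w (by omega) hw
      have key : auxA r D mr w l + (1-2*r) • auxA r D mr w (l+1)
          + (r^2-r) • auxA r D mr w (l+2) = 0 := by
        have e0 : w.length - l = m'+2 := by omega
        have e1 : w.length - (l+1) = m'+1 := by omega
        have e2 : w.length - (l+2) = m' := by omega
        rw [auxA, auxA, auxA, e0, e1, e2]
        rw [Finset.sum_range_succ' _ (m'+2), Finset.sum_range_succ _ (m'+1),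
          Finset.sum_range_succ _ (m'+1)]
        have hg : ∀ i ∈ Finset.range (m'+1),
            ((-1:k)^(i+1)) • auxK r D mr w l (i+1)
              = (((-1:k)^(i+1)) • auxQ r mr w (l+1) (i+1)
                  - ((-1:k)^i) • auxQ r mr w (l+1) i)
                - (1-2*r) • (((-1:k)^i) • auxK r D mr w (l+1) i)
                - (r^2-r) • (((-1:k)^i) • auxK r D mr w (l+2) i) := by
          intro i hi
          simp only [Finset.mem_range] at hi
          rw [auxK_step r D hD1 hDw mr hmrl hmrr hmrrec w l i (by omega),
            auxPQ, pow_succ]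
          match_scalars <;> ring
        rw [Finset.sum_congr rfl hg]
        rw [Finset.sum_sub_distrib, Finset.sum_sub_distrib, Finset.sum_range_sub
          (fun i => ((-1:k)^i) • auxQ r mr w (l+1) i) (m'+1)]
        rw [auxK_zero r D hD1 hDw mr hmrl w l (by omega)]
        have htop := auxK_top r D hD1 hDw mr hmrr w l (m'+1) (by omega)
        rw [htop, auxPQ]
        simp only [smul_add, smul_sub, Finset.smul_sum, pow_succ, pow_zero, one_smul]
        match_scalars <;> ring
      rw [hA1, hA2, smul_zero, smul_zero, add_zero, add_zero] at key
      exact key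

end AuxLemmas

/--
The antipode of the Hopf algebra `(k⟨A⟩, ∗_r, Δ)` is
`S = Σ^{1−2r} ∘ T ∘ R`, where `T(w) = (−1)^{ℓ(w)} w` and `R` reverses words:
that is, `S` satisfies the (two-sided) antipode identity
`Σ S(w₍₁₎) ∗_r w₍₂₎ = Σ w₍₁₎ ∗_r S(w₍₂₎) = ε(w)1` for the deconcatenation
coproduct.  (For `r = 1/2`, `Σ^{1−2r} = Σ^0 = id` and the antipode is `T∘R`.)
-/
theorem stmt11 (r : k)
    (D : L → TensorAlgebra k L →ₗ[k] TensorAlgebra k L)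
    (hD1 : ∀ a : L, D a 1 = 0)
    (hDw : ∀ (a c : L) (u : List L),
      D a (TensorAlgebra.ι k c * word k u) = TensorAlgebra.ι k (a * c) * word k u)
    (mr : TensorAlgebra k L →ₗ[k] TensorAlgebra k L →ₗ[k] TensorAlgebra k L)
    (hmrl : ∀ x, mr 1 x = x) (hmrr : ∀ x, mr x 1 = x)
    (hmrrec : ∀ (a b : L) (v w : List L),
      mr (word k (a :: v)) (word k (b :: w))
        = TensorAlgebra.ι k a * mr (word k v) (word k (b :: w))
          + TensorAlgebra.ι k b * mr (word k (a :: v)) (word k w)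
          + (1 - 2 * r) • (TensorAlgebra.ι k (a * b) * mr (word k v) (word k w))
          + (r ^ 2 - r) • D (a * b) (mr (word k v) (word k w)))
    (S12r T R : TensorAlgebra k L →ₗ[k] TensorAlgebra k L)
    (hS12r : ∀ w : List L, S12r (word k w) = psi k (fun n => (1 - 2 * r) ^ (n - 1)) w)
    (hT : ∀ w : List L, T (word k w) = ((-1 : k) ^ w.length) • word k w)
    (hR : ∀ w : List L, R (word k w) = word k w.reverse)
    (S : TensorAlgebra k L →ₗ[k] TensorAlgebra k L)
    (hS : ∀ x, S x = S12r (T (R x))) :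
    ∀ w : List L,
      (∑ i ∈ Finset.range (w.length + 1),
          mr (S (word k (w.take i))) (word k (w.drop i))
        = if w.length = 0 then 1 else 0) ∧
      (∑ i ∈ Finset.range (w.length + 1),
          mr (word k (w.take i)) (S (word k (w.drop i)))
        = if w.length = 0 then 1 else 0) := by
  have hSw : ∀ u : List L,
      S (word k u) = ((-1 : k)^u.length) • psi k (fun n => (1 - 2*r)^(n-1)) u.reverse := by
    intro u
    rw [hS, hR, hT, map_smul, hS12r, List.length_reverse]
  have hS1 : S (1 : TensorAlgebra k L) = 1 := by
    have h := hSw []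
    rw [word_nil, List.reverse_nil, psi_nil, List.length_nil, pow_zero, one_smul] at h
    exact h
  -- the left antipode identity, for every word
  have leftId : ∀ v : List L,
      ∑ i ∈ Finset.range (v.length + 1),
          mr (S (word k (v.take i))) (word k (v.drop i))
        = if v.length = 0 then 1 else 0 := by
    intro v
    by_cases hv : v.length = 0
    · have hnil : v = [] := List.length_eq_zero_iff.mp hv
      subst hnil
      simp only [List.length_nil, Finset.sum_range_one, List.take_nil, List.drop_nil,
        word_nil, hmrr, hS1]
      simp
    · have hsum : ∑ i ∈ Finset.range (v.length + 1),
          mr (S (word k (v.take i))) (word k (v.drop i)) = auxA r D mr v 0 := by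
        rw [auxA, Nat.sub_zero]
        refine Finset.sum_congr rfl fun i hi => ?_
        simp only [Finset.mem_range] at hi
        rw [hSw, List.length_take, min_eq_left (by omega), mr_smul1, auxK, if_pos rfl, auxF]
      rw [hsum, Amaster r D hD1 hDw mr hmrl hmrr hmrrec v.length 0 v (by omega) (by omega),
        if_neg hv]
  intro w
  refine ⟨leftId w, ?_⟩
  by_cases hw0 : w.length = 0
  · have hnil : w = [] := List.length_eq_zero_iff.mp hw0
    subst hnil
    simp only [List.length_nil, Finset.sum_range_one, List.take_nil, List.drop_nil,
      word_nil, hmrl, hS1]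
    simp
  · -- apply R to the left identity for w.reverse
    have h1 := leftId w.reverse
    rw [List.length_reverse, if_neg hw0] at h1
    have h2 := congrArg R h1
    rw [map_sum, map_zero] at h2
    have h3 : ∀ j ∈ Finset.range (w.length + 1),
        R (mr (S (word k (w.reverse.take j))) (word k (w.reverse.drop j)))
          = ((-1 : k)^j) • mr (psi k (fun n => (1 - 2*r)^(n-1)) ((w.drop (w.length - j)).reverse))
              (word k (w.take (w.length - j))) := by
      intro j hj
      simp only [Finset.mem_range] at hj
      have hA : w.reverse.take j = (w.drop (w.length - j)).reverse := by
        rw [List.reverse_drop]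
        congr 1
        omega
      have hB : w.reverse.drop j = (w.take (w.length - j)).reverse := by
        rw [List.reverse_take]
        congr 1
        omega
      rw [hA, hB, hSw, List.length_reverse, List.length_drop,
        show w.length - (w.length - j) = j from by omega, List.reverse_reverse,
        mr_smul1, map_smul,
        Req' r D hD1 hDw R hR mr hmrl hmrr hmrrec,
        psi_rev r D hD1 hDw R hR, List.reverse_reverse]
    rw [Finset.sum_congr rfl h3] at h2
    have h5 : ∑ i ∈ Finset.range (w.length + 1),
        ((-1 : k)^(w.length - i)) •
          mr (psi k (fun n => (1 - 2*r)^(n-1)) ((w.drop i).reverse)) (word k (w.take i)) = 0 := by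
      rw [← Finset.sum_range_reflect
        (fun i => ((-1 : k)^(w.length - i)) •
          mr (psi k (fun n => (1 - 2*r)^(n-1)) ((w.drop i).reverse)) (word k (w.take i)))
        (w.length + 1)]
      rw [← h2]
      refine Finset.sum_congr rfl fun j hj => ?_
      simp only [Finset.mem_range] at hj
      congr 2 <;> omega
    rw [if_neg hw0, ← h5]
    refine Finset.sum_congr rfl fun i hi => ?_
    simp only [Finset.mem_range] at hi
    rw [hSw, List.length_drop, map_smul,
      ← mr_comm' r D mr hmrl hmrr hmrrec (w.take i)
        (psi k (fun n => (1 - 2*r)^(n-1)) ((w.drop i).reverse))]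
end

section
/- For any word w in a quasi-shuffle algebra and f ∈ t·k[[t]], one has Ψ_f(1/(1−λw)) = 1/(1 − f_⋄(λw)) in k⟨A⟩[[λ]], where 1/(1−λw) = Σ_{n≥0} λⁿ wⁿ (concatenation powers) and f_⋄(λw) = Σ_{n≥1} cₙ λⁿ w^{⋄n}. -/
/-!
Quasi-shuffle algebras (Hoffman–Ihara).  We model the span `kA` of the alphabet
(with its commutative associative product `⋄`, written `*` in `L`) as a
non-unital commutative `k`-algebra `L`, and the word algebra `k⟨A⟩` as the
tensor algebra `TensorAlgebra k L`, in which a word `a₁⋯aₙ` is the product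
`ι a₁ * ⋯ * ι aₙ`.
-/

open TensorAlgebra

variable (k : Type*) [Field k]
variable {L : Type*} [NonUnitalCommRing L] [Module k L]
  [SMulCommClass k L L] [IsScalarTower k L L]

lemma psi_replicate_succ (c : ℕ → k) (w : L) (n : ℕ) :
    psi k c (List.replicate (n + 1) w) =
      ∑ j ∈ Finset.range (n + 1),
        c (j + 1) • (TensorAlgebra.ι k (blockProd (List.replicate (j + 1) w))
          * psi k c (List.replicate (n - j) w)) := by
  rw [List.replicate_succ, psi]
  apply Finset.sum_congr (by simp)
  intro j hj
  simp only [Finset.mem_range] at hj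
  rw [List.take_replicate, List.drop_replicate, min_eq_left (by omega),
    ← List.replicate_succ]

/--
Hoffman–Ihara, Thm 5.1.  For `f = Σ_{n≥1} cₙtⁿ ∈ t·k[[t]]` and
`w ∈ kA`, `Ψ_f(1/(1−λw)) = 1/(1−f_⋄(λw))` in `k⟨A⟩[[λ]]`, where
`1/(1−λw) = Σ_{n≥0} λⁿ wⁿ` (concatenation powers, i.e. the word of `n` copies
of `w`) and `f_⋄(λw) = Σ_{n≥1} cₙ λⁿ w^{⋄n}`.  We express the right-hand side
by saying that `(1 − f_⋄(λw)) · Ψ_f(1/(1−λw)) = 1`.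
-/
theorem stmt12 (c : ℕ → k) (hc : c 0 = 0) (w : L)
    (F : TensorAlgebra k L →ₗ[k] TensorAlgebra k L)
    (hF : ∀ u : List L, F (word k u) = psi k c u) :
    (1 - PowerSeries.mk (fun n =>
        if n = 0 then 0 else c n • TensorAlgebra.ι k (blockProd (List.replicate n w))))
      * PowerSeries.mk (fun n => F (word k (List.replicate n w))) = 1 := by
  ext n
  rw [sub_mul, one_mul, map_sub, PowerSeries.coeff_mul,
    Finset.Nat.sum_antidiagonal_eq_sum_range_succ_mk]
  simp only [PowerSeries.coeff_mk, hF]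
  cases n with
  | zero => simp [psi, hc]
  | succ m =>
    rw [Finset.sum_range_succ']
    simp only [if_true, if_false, eq_self_iff_true, Nat.succ_ne_zero, zero_mul, add_zero,
      if_neg (Nat.succ_ne_zero _)]
    rw [psi_replicate_succ]
    have h1 : PowerSeries.coeff (R := TensorAlgebra k L) (m+1) 1 = 0 := by
      simp [PowerSeries.coeff_one]
    rw [h1]
    rw [sub_eq_zero]
    apply Finset.sum_congr rfl
    intro j hj
    rw [smul_mul_assoc]
    have : m + 1 - (j + 1) = m - j := by omega
    rw [this]
end

section
/- The multiple zeta values of repeated argument 2 satisfy ζ({2}ₙ) = π^{2n}/(2n+1)!, i.e. the nested sum Σ_{n₁>n₂>⋯>nₙ≥1} 1/(n₁²⋯nₙ²) equals π^{2n}/(2n+1)! for every n ≥ 0. -/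
/-- The multiple zeta value `ζ(e₁,…,eₙ) = Σ_{n₁>n₂>⋯>nₙ≥1} 1/(n₁^{e₁}⋯nₙ^{eₙ})`,
as a sum over strictly decreasing tuples of positive integers
(`f 0 = n₁ > f 1 = n₂ > ⋯`); for `n = 0` it equals `1`. -/
noncomputable def mzv {n : ℕ} (e : Fin n → ℕ) : ℝ :=
  ∑' f : {f : Fin n → ℕ // StrictAnti f ∧ ∀ i, 0 < f i},
    ∏ i, (1 : ℝ) / (f.1 i : ℝ) ^ (e i)

open Filter Topology Real

namespace Stmt14Aux

/-- The summand. -/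
noncomputable def a (i : ℕ) : ℝ := (1 : ℝ) / ((i : ℝ) + 1) ^ 2

lemma a_nonneg (i : ℕ) : 0 ≤ a i := by unfold a; positivity

lemma summable_a : Summable a := by
  have h : Summable (fun n : ℕ => (1 : ℝ) / (n : ℝ) ^ 2) :=
    summable_one_div_nat_pow.mpr one_lt_two
  have := h.comp_injective Nat.succ_injective
  refine this.congr fun i => ?_
  simp [a, Function.comp]

/-- Bound for partial sums of `a`. -/
noncomputable def c : ℝ := ∑' i, a i

lemma sum_a_le (N : ℕ) : ∑ i ∈ Finset.range N, a i ≤ c :=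
  Summable.sum_le_tsum _ (fun i _ => a_nonneg i) summable_a

/-- Weight of a finite set. -/
noncomputable def w (S : Finset ℕ) : ℝ := ∏ i ∈ S, a i

lemma w_nonneg (S : Finset ℕ) : 0 ≤ w S := Finset.prod_nonneg fun i _ => a_nonneg i

/-- Partial product identity. -/
lemma prod_eq_sum (t : ℝ) (N : ℕ) :
    ∏ i ∈ Finset.range N, (1 + t * a i)
      = ∑ S ∈ (Finset.range N).powerset, t ^ S.card * w S := by
  have := Finset.prod_add (fun i => t * a i) (fun _ => (1 : ℝ)) (Finset.range N)
  simp only [Finset.prod_const_one, mul_one] at this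
  rw [Finset.prod_congr rfl (fun i _ => add_comm 1 (t * a i)), this]
  refine Finset.sum_congr rfl fun S _ => ?_
  rw [Finset.prod_mul_distrib, Finset.prod_const, w]

lemma prod_le_exp (t : ℝ) (ht : 0 ≤ t) (N : ℕ) :
    ∏ i ∈ Finset.range N, (1 + t * a i) ≤ Real.exp (t * c) := by
  calc ∏ i ∈ Finset.range N, (1 + t * a i)
      ≤ ∏ i ∈ Finset.range N, Real.exp (t * a i) :=
        Finset.prod_le_prod
          (fun i _ => by nlinarith [a_nonneg i, mul_nonneg ht (a_nonneg i)])
          (fun i _ => by linarith [Real.add_one_le_exp (t * a i)])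
    _ = Real.exp (∑ i ∈ Finset.range N, t * a i) := (Real.exp_sum _ _).symm
    _ ≤ Real.exp (t * c) := by
        apply Real.exp_le_exp.mpr
        rw [← Finset.mul_sum]
        exact mul_le_mul_of_nonneg_left (sum_a_le N) ht

lemma summable_w_nonneg (t : ℝ) (ht : 0 ≤ t) :
    Summable (fun S : Finset ℕ => t ^ S.card * w S) := by
  apply summable_of_sum_le (c := Real.exp (t * c))
    (fun S => mul_nonneg (pow_nonneg ht _) (w_nonneg S))
  intro u
  set N : ℕ := (u.sup fun S => S.sup id) + 1 with hN
  have hsub : u ⊆ (Finset.range N).powerset := by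
    intro S hS
    rw [Finset.mem_powerset]
    intro i hi
    rw [Finset.mem_range]
    calc i ≤ S.sup id := Finset.le_sup (f := id) hi
      _ ≤ u.sup fun S => S.sup id := Finset.le_sup (f := fun S => S.sup id) hS
      _ < N := Nat.lt_succ_self _
  calc ∑ S ∈ u, t ^ S.card * w S
      ≤ ∑ S ∈ (Finset.range N).powerset, t ^ S.card * w S :=
        Finset.sum_le_sum_of_subset_of_nonneg hsub
          (fun S _ _ => mul_nonneg (pow_nonneg ht _) (w_nonneg S))
    _ = ∏ i ∈ Finset.range N, (1 + t * a i) := (prod_eq_sum t N).symm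
    _ ≤ Real.exp (t * c) := prod_le_exp t ht N

lemma summable_w (t : ℝ) : Summable (fun S : Finset ℕ => t ^ S.card * w S) := by
  apply Summable.of_abs
  refine (summable_w_nonneg |t| (abs_nonneg t)).congr fun S => ?_
  rw [abs_mul, abs_pow, abs_of_nonneg (w_nonneg S)]

/-- The elementary symmetric "power sums". -/
noncomputable def ee (n : ℕ) : ℝ := ∑' S : {S : Finset ℕ // S.card = n}, w S.1

/-- The generating function. -/
noncomputable def FF (t : ℝ) : ℝ := ∑' S : Finset ℕ, t ^ S.card * w S

lemma summable_w_fiber (n : ℕ) : Summable (fun S : {S : Finset ℕ // S.card = n} => w S.1) := by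
  have h := (summable_w 1).subtype {S : Finset ℕ | S.card = n}
  refine h.congr fun S => ?_
  simp

lemma hasSum_ee (t : ℝ) : HasSum (fun n : ℕ => t ^ n * ee n) (FF t) := by
  have hg : Summable (fun S : Finset ℕ => t ^ S.card * w S) := summable_w t
  have h1 := hg.hasSum.tsum_fiberwise (fun S => S.card)
  refine h1.congr_fun fun n => ?_
  have h2 : ∀ S : ↥((fun S : Finset ℕ => S.card) ⁻¹' {n}),
      t ^ S.1.card * w S.1 = t ^ n * w S.1 := by
    rintro ⟨S, hS⟩
    simp only [Set.mem_preimage, Set.mem_singleton_iff] at hS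
    rw [hS]
  rw [tsum_congr h2, tsum_mul_left]
  rfl

lemma tendsto_prod_FF (t : ℝ) :
    Tendsto (fun N : ℕ => ∏ i ∈ Finset.range N, (1 + t * a i)) atTop (𝓝 (FF t)) := by
  have hg := (summable_w t).hasSum
  have hmono : Monotone (fun N : ℕ => (Finset.range N).powerset) :=
    fun M N h => Finset.powerset_mono.mpr (Finset.range_subset_range.mpr h)
  have hcof : ∀ S : Finset ℕ, ∃ N : ℕ, S ∈ (Finset.range N).powerset := by
    intro S
    refine ⟨S.sup id + 1, Finset.mem_powerset.mpr fun i hi => Finset.mem_range.mpr ?_⟩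
    exact Nat.lt_succ_of_le (Finset.le_sup (f := id) hi)
  have := hg.comp (tendsto_atTop_finset_of_monotone hmono hcof)
  refine Tendsto.congr (fun N => ?_) this
  exact (prod_eq_sum t N).symm

/-- Coefficients of the target series. -/
noncomputable def b (n : ℕ) : ℝ := Real.pi ^ (2 * n) / ((2 * n + 1).factorial : ℝ)

noncomputable def G (t : ℝ) : ℝ := ∑' n : ℕ, t ^ n * b n

lemma summable_b (t : ℝ) : Summable (fun n : ℕ => t ^ n * b n) := by
  apply Summable.of_norm
  refine Summable.of_nonneg_of_le (fun n => norm_nonneg _)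
    (fun n => ?_) (Real.summable_pow_div_factorial (Real.pi ^ 2 * |t|))
  rw [Real.norm_eq_abs, abs_mul, abs_pow, abs_of_nonneg (show (0:ℝ) ≤ b n by unfold b; positivity)]
  unfold b
  calc |t| ^ n * (Real.pi ^ (2 * n) / ((2 * n + 1).factorial : ℝ))
      = (Real.pi ^ 2 * |t|) ^ n / ((2 * n + 1).factorial : ℝ) := by
        rw [mul_pow, pow_mul]; ring
    _ ≤ (Real.pi ^ 2 * |t|) ^ n / ((n).factorial : ℝ) := by
        gcongr
        omega

lemma hasSum_G (t : ℝ) : HasSum (fun n : ℕ => t ^ n * b n) (G t) := (summable_b t).hasSum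

lemma FF_pos (t : ℝ) (ht : 0 < t) : FF t = G t := by
  set y := Real.sqrt t with hy
  have hy2 : y ^ 2 = t := Real.sq_sqrt ht.le
  have hypos : 0 < y := Real.sqrt_pos.mpr ht
  have hpy : Real.pi * y ≠ 0 := by positivity
  -- complex Euler product at z = y * I
  have h1 := Complex.tendsto_euler_sin_prod (y * Complex.I)
  have hterm : ∀ N : ℕ,
      (Real.pi : ℂ) * (y * Complex.I) *
          ∏ j ∈ Finset.range N, ((1 : ℂ) - (y * Complex.I) ^ 2 / ((j : ℂ) + 1) ^ 2)
        = (Real.pi : ℂ) * (y * Complex.I) *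
            ((∏ i ∈ Finset.range N, (1 + t * a i) : ℝ) : ℂ) := by
    intro N
    congr 1
    push_cast
    refine Finset.prod_congr rfl fun j _ => ?_
    have : ((y : ℂ) * Complex.I) ^ 2 = -(t : ℂ) := by
      rw [mul_pow, Complex.I_sq]
      push_cast [← hy2]
      ring
    rw [this]
    unfold a
    push_cast
    ring
  rw [tendsto_congr hterm] at h1
  have hsin : Complex.sin ((Real.pi : ℂ) * (y * Complex.I)) = Complex.sinh (Real.pi * y) * Complex.I := by
    rw [← mul_assoc, ← Complex.sin_mul_I]
  rw [hsin] at h1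
  have hne : (Real.pi : ℂ) * (y * Complex.I) ≠ 0 := by
    simp [Complex.I_ne_zero, Real.pi_ne_zero, hypos.ne']
  have h2 := h1.const_mul (((Real.pi : ℂ) * (y * Complex.I))⁻¹)
  set L : ℝ := Real.sinh (Real.pi * y) / (Real.pi * y) with hL
  have hπc : (Real.pi : ℂ) ≠ 0 := by exact_mod_cast Real.pi_ne_zero
  have hyc : (y : ℂ) ≠ 0 := by exact_mod_cast hypos.ne'
  have hlim : (((Real.pi : ℂ) * (y * Complex.I))⁻¹ * (Complex.sinh (Real.pi * y) * Complex.I))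
      = ((L : ℝ) : ℂ) := by
    rw [hL, Complex.ofReal_div, Complex.ofReal_sinh, Complex.ofReal_mul]
    field_simp [Complex.I_ne_zero]
  rw [hlim] at h2
  have h2' : Tendsto (fun N : ℕ => ((∏ i ∈ Finset.range N, (1 + t * a i) : ℝ) : ℂ)) atTop
      (𝓝 ((L : ℝ) : ℂ)) := by
    refine Tendsto.congr (fun N => ?_) h2
    rw [inv_mul_cancel_left₀ hne]
  have h3 : Tendsto (fun N : ℕ => ∏ i ∈ Finset.range N, (1 + t * a i)) atTop (𝓝 L) := by
    have h4 := (Complex.continuous_re.tendsto _).comp h2'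
    rw [Complex.ofReal_re] at h4
    exact Tendsto.congr (fun N => Complex.ofReal_re _) h4
  -- identify the limit with G t
  have h5 : HasSum (fun n : ℕ => t ^ n * b n) L := by
    have h6 := (Real.hasSum_sinh (Real.pi * y)).div_const (Real.pi * y)
    refine h6.congr_fun fun n => ?_
    rw [b, pow_succ, mul_pow, pow_mul y, hy2]
    field_simp
  rw [tendsto_nhds_unique (tendsto_prod_FF t) h3, h5.unique (hasSum_G t)]

lemma FF_neg (t : ℝ) (ht : t < 0) : FF t = G t := by
  set y := Real.sqrt (-t) with hy
  have hy2 : y ^ 2 = -t := Real.sq_sqrt (by linarith)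
  have hypos : 0 < y := Real.sqrt_pos.mpr (by linarith)
  have hpy : Real.pi * y ≠ 0 := by positivity
  have h1 := Real.tendsto_euler_sin_prod y
  have hterm : ∀ N : ℕ,
      Real.pi * y * ∏ j ∈ Finset.range N, ((1 : ℝ) - y ^ 2 / ((j : ℝ) + 1) ^ 2)
        = Real.pi * y * ∏ i ∈ Finset.range N, (1 + t * a i) := by
    intro N
    congr 1
    refine Finset.prod_congr rfl fun j _ => ?_
    rw [hy2]
    unfold a
    ring
  rw [tendsto_congr hterm] at h1
  set L : ℝ := Real.sin (Real.pi * y) / (Real.pi * y) with hL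
  have h2 := h1.const_mul (Real.pi * y)⁻¹
  have h3 : Tendsto (fun N : ℕ => ∏ i ∈ Finset.range N, (1 + t * a i)) atTop (𝓝 L) := by
    rw [hL, div_eq_inv_mul]
    exact Tendsto.congr (fun N => inv_mul_cancel_left₀ hpy _) h2
  have h5 : HasSum (fun n : ℕ => t ^ n * b n) L := by
    have h6 := (Real.hasSum_sin (Real.pi * y)).div_const (Real.pi * y)
    refine h6.congr_fun fun n => ?_
    have hyt : ((-1 : ℝ)) ^ n * y ^ (2 * n) = t ^ n := by
      rw [pow_mul y, hy2, ← neg_pow]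
      ring_nf
    rw [b, pow_succ, mul_pow Real.pi y]
    field_simp
    rw [← hyt]
  rw [tendsto_nhds_unique (tendsto_prod_FF t) h3, h5.unique (hasSum_G t)]

lemma FF_zero : FF 0 = G 0 := by
  have h1 : FF 0 = 1 := by
    rw [FF]
    rw [tsum_eq_single (∅ : Finset ℕ)]
    · simp [w]
    · intro S hS
      have : S.card ≠ 0 := by simpa [Finset.card_eq_zero] using hS
      rw [zero_pow this, zero_mul]
  have h2 : G 0 = 1 := by
    rw [G]
    rw [tsum_eq_single 0]
    · simp [b]
    · intro n hn
      rw [zero_pow hn, zero_mul]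
  rw [h1, h2]

/-- Uniqueness of power-series coefficients. -/
lemma coeff_unique {F : ℝ → ℝ} {α β : ℕ → ℝ}
    (hα : ∀ x : ℝ, HasSum (fun n => x ^ n • α n) (F x))
    (hβ : ∀ x : ℝ, HasSum (fun n => x ^ n • β n) (F x)) : α = β := by
  have key : ∀ γ : ℕ → ℝ, (∀ x : ℝ, HasSum (fun n => x ^ n • γ n) (F x)) →
      ∃ p : FormalMultilinearSeries ℝ ℝ ℝ, (∀ n, p.coeff n = γ n) ∧ HasFPowerSeriesAt F p 0 := by
    intro γ hγ
    refine ⟨fun n => ContinuousMultilinearMap.mkPiRing ℝ (Fin n) (γ n), fun n => ?_, ?_⟩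
    · simp [FormalMultilinearSeries.coeff, ContinuousMultilinearMap.mkPiRing_apply]
    · refine hasFPowerSeriesAt_iff.mpr ?_
      filter_upwards with z
      have : ∀ n : ℕ, (FormalMultilinearSeries.coeff
          (fun n => ContinuousMultilinearMap.mkPiRing ℝ (Fin n) (γ n)) n) = γ n := fun n => by
        simp [FormalMultilinearSeries.coeff, ContinuousMultilinearMap.mkPiRing_apply]
      simp only [this, zero_add]
      exact hγ z
  obtain ⟨p, hp, hFp⟩ := key α hα
  obtain ⟨q, hq, hFq⟩ := key β hβ
  have hpq : p = q := hFp.eq_formalMultilinearSeries hFq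
  funext n
  rw [← hp n, ← hq n, hpq]

/-- The equivalence between strictly decreasing positive `n`-tuples and `n`-element
subsets of `ℕ` (shifted down by one). -/
noncomputable def mzvEquiv (n : ℕ) :
    {f : Fin n → ℕ // StrictAnti f ∧ ∀ i, 0 < f i} ≃ {S : Finset ℕ // S.card = n} where
  toFun fp := ⟨Finset.univ.image (fun i => fp.1 i - 1), by
    have hinj : Function.Injective (fun i => fp.1 i - 1) := by
      intro i j hij
      simp only at hij
      have hi := fp.2.2 i
      have hj := fp.2.2 j
      have : fp.1 i = fp.1 j := by omega
      exact fp.2.1.injective this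
    rw [Finset.card_image_of_injective _ hinj, Finset.card_univ, Fintype.card_fin]⟩
  invFun Sp := ⟨fun i => Sp.1.orderEmbOfFin Sp.2 i.rev + 1, by
    constructor
    · intro i j hij
      have h1 : j.rev < i.rev := by
        rw [Fin.rev_lt_rev]
        exact hij
      have := (Sp.1.orderEmbOfFin Sp.2).strictMono h1
      show Sp.1.orderEmbOfFin Sp.2 j.rev + 1 < Sp.1.orderEmbOfFin Sp.2 i.rev + 1
      omega
    · intro i
      show 0 < Sp.1.orderEmbOfFin Sp.2 i.rev + 1
      omega⟩
  left_inv := by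
    rintro ⟨f, hanti, hpos⟩
    ext i
    simp only
    set S := Finset.univ.image (fun i => f i - 1) with hS
    have hcard : S.card = n := by
      have hinj : Function.Injective (fun i => f i - 1) := by
        intro i j hij
        simp only at hij
        have hi := hpos i
        have hj := hpos j
        have : f i = f j := by omega
        exact hanti.injective this
      rw [hS, Finset.card_image_of_injective _ hinj, Finset.card_univ, Fintype.card_fin]
    have hg : (fun j : Fin n => f j.rev - 1) = S.orderEmbOfFin hcard := by
      apply Finset.orderEmbOfFin_unique
      · intro j
        rw [hS]
        exact Finset.mem_image_of_mem _ (Finset.mem_univ _)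
      · intro j j' hjj'
        have h1 : j'.rev < j.rev := by rw [Fin.rev_lt_rev]; exact hjj'
        have h2 : f j.rev < f j'.rev := hanti h1
        have h3 := hpos j.rev
        show f j.rev - 1 < f j'.rev - 1
        omega
    have h4 := congrFun hg i.rev
    simp only [Fin.rev_rev] at h4
    have hfi := hpos i
    show S.orderEmbOfFin hcard i.rev + 1 = f i
    omega
  right_inv := by
    rintro ⟨S, hcard⟩
    ext1
    simp only
    have h1 : (fun i : Fin n => S.orderEmbOfFin hcard i.rev + 1 - 1)
        = (fun i : Fin n => S.orderEmbOfFin hcard i.rev) := by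
      funext i; omega
    rw [h1]
    have h2 : Finset.univ.image (fun i : Fin n => S.orderEmbOfFin hcard i.rev)
        = Finset.univ.image (S.orderEmbOfFin hcard) := by
      rw [show (fun i : Fin n => S.orderEmbOfFin hcard i.rev)
          = (S.orderEmbOfFin hcard) ∘ Fin.rev by rfl, ← Finset.image_image]
      congr 1
      exact Finset.image_univ_of_surjective Fin.rev_surjective
    rw [h2]
    apply Finset.coe_injective
    rw [Finset.coe_image, Finset.coe_univ, Set.image_univ, Finset.range_orderEmbOfFin]

lemma mzv_eq_ee (n : ℕ) : mzv (fun _ : Fin n => 2) = ee n := by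
  rw [mzv, ee, ← Equiv.tsum_eq (mzvEquiv n) (fun Sp => w Sp.1)]
  refine tsum_congr fun fp => ?_
  obtain ⟨f, hanti, hpos⟩ := fp
  show ∏ i, (1 : ℝ) / (f i : ℝ) ^ 2 = w (Finset.univ.image (fun i => f i - 1))
  have hinj : ∀ x ∈ Finset.univ, ∀ y ∈ Finset.univ,
      (fun i => f i - 1) x = (fun i => f i - 1) y → x = y := by
    intro i _ j _ hij
    simp only at hij
    have hi := hpos i
    have hj := hpos j
    have : f i = f j := by omega
    exact hanti.injective this
  rw [w, Finset.prod_image hinj]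
  refine Finset.prod_congr rfl fun i _ => ?_
  unfold a
  have hfi := hpos i
  have : ((f i - 1 : ℕ) : ℝ) + 1 = (f i : ℝ) := by
    have : (f i - 1) + 1 = f i := by omega
    exact_mod_cast congrArg (Nat.cast : ℕ → ℝ) this
  rw [this]


lemma FF_eq_G (t : ℝ) : FF t = G t := by
  rcases lt_trichotomy t 0 with h | h | h
  · exact FF_neg t h
  · rw [h]; exact FF_zero
  · exact FF_pos t h

lemma ee_eq_b : ee = b := by
  apply coeff_unique (F := FF)
  · intro x
    simpa [smul_eq_mul] using hasSum_ee x
  · intro x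
    rw [FF_eq_G]
    simpa [smul_eq_mul] using hasSum_G x

end Stmt14Aux

/-- `ζ({2}ₙ) = π^{2n}/(2n+1)!` for every `n ≥ 0`. -/
theorem stmt14 (n : ℕ) :
    mzv (fun _ : Fin n => 2) = Real.pi ^ (2 * n) / ((2 * n + 1).factorial : ℝ) := by
  rw [Stmt14Aux.mzv_eq_ee n, Stmt14Aux.ee_eq_b]
  rfl
end
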